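/- Let 0 < ε < ρ²/2 with ρ ∈ (0,1], and let G = (V,E) be a graph on n vertices (with ρn a positive integer) that is ε-far from having a ρn independent set. If C ⊆ V satisfies |E(C)| ≤ εn²/4, then |C| < (1 − ε/(2ρ²))·ρn. -/

import Mathlib

open Finset

variable {V : Type*}

/-- Number of edges of `G` with both endpoints in `S` (i.e. edges of the induced subgraph `G[S]`). -/
noncomputable def edgesIn (G : SimpleGraph V) (S : Finset V) : ℕ :=
  {e ∈ G.edgeSet | ∀ v ∈ e, v ∈ S}.ncard

/-- Number of edges of `G` with one endpoint in `S` and one endpoint in `T`. -/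
noncomputable def edgesBetween (G : SimpleGraph V) (S T : Finset V) : ℕ :=
  {e : Sym2 V | e ∈ G.edgeSet ∧ ∃ u v, e = s(u, v) ∧ u ∈ S ∧ v ∈ T}.ncard

/-- Degree of `v` in the induced subgraph `G[S]`, i.e. `|N(v) ∩ S|`. -/
noncomputable def degIn (G : SimpleGraph V) (S : Finset V) (v : V) : ℕ :=
  ((S : Set V) ∩ G.neighborSet v).ncard

/-- `S_{↑v}`: the vertices of `S` with strictly more neighbours in `S` than `v` has. -/
def upSet (G : SimpleGraph V) (S : Finset V) (v : V) : Set V :=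
  {u | u ∈ S ∧ degIn G S v < degIn G S u}

/-- The maximum removal ratio `MRR_G(J, C)` with parameters `ε, ρ, ℓ`. -/
noncomputable def MRR [DecidableEq V] (G : SimpleGraph V) (ε ρ ℓ : ℝ) (J C : Finset V) : ℝ :=
  sSup {x : ℝ | ∃ v ∈ J, x = max
    ((degIn G (insert v C) v : ℝ) /
      max (degIn G J v : ℝ) (ε / (Real.sqrt ℓ * ρ ^ 2) * J.card))
    (((upSet G C v).ncard : ℝ) /
      max (((upSet G C v) ∩ (J : Set V)).ncard : ℝ) (ε / (Real.sqrt ℓ * ρ ^ 2) * J.card))}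

/-- `G` is `ε`-far from having a `ρn` independent set: every set of `ρn` vertices
spans at least `ε n²` edges. -/
def FarFrom (G : SimpleGraph V) [Fintype V] (ρ ε : ℝ) : Prop :=
  ∀ U : Finset V, (U.card : ℝ) = ρ * Fintype.card V →
    ε * (Fintype.card V : ℝ) ^ 2 ≤ (edgesIn G U : ℝ)

lemma edgesIn_mono [Fintype V] (G : SimpleGraph V) {S T : Finset V} (h : S ⊆ T) :
    edgesIn G S ≤ edgesIn G T := by
  apply Set.ncard_le_ncard _ (Set.toFinite _)
  rintro e ⟨he, hv⟩
  exact ⟨he, fun v hv' => h (hv v hv')⟩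

lemma edgesIn_le [Fintype V] [DecidableEq V] (G : SimpleGraph V) {C U : Finset V} (hCU : C ⊆ U) :
    edgesIn G U ≤ edgesIn G C + (U \ C).card * U.card := by
  classical
  set S : Set (Sym2 V) := {e ∈ G.edgeSet | (∀ v ∈ e, v ∈ U) ∧ ¬ ∀ v ∈ e, v ∈ C} with hS
  have hsub : {e ∈ G.edgeSet | ∀ v ∈ e, v ∈ U} ⊆ {e ∈ G.edgeSet | ∀ v ∈ e, v ∈ C} ∪ S := by
    rintro e ⟨he, hv⟩
    by_cases hc : ∀ v ∈ e, v ∈ C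
    · exact Or.inl ⟨he, hc⟩
    · exact Or.inr ⟨he, hv, hc⟩
  have h1 : edgesIn G U ≤ edgesIn G C + S.ncard := by
    calc edgesIn G U ≤ ({e ∈ G.edgeSet | ∀ v ∈ e, v ∈ C} ∪ S).ncard :=
          Set.ncard_le_ncard hsub (Set.toFinite _)
      _ ≤ _ := Set.ncard_union_le _ _
  have key : ∀ e : Sym2 V, s((if e.out.1 ∈ C then e.out.swap else e.out).1,
      (if e.out.1 ∈ C then e.out.swap else e.out).2) = e := by
    intro e
    by_cases h : e.out.1 ∈ C
    · simp only [h, if_true, Prod.fst_swap, Prod.snd_swap]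
      rw [Sym2.eq_swap]; exact Quot.out_eq e
    · simp only [h, if_false]; exact Quot.out_eq e
  have h2 : S.ncard ≤ (U \ C).card * U.card := by
    have hle := Set.ncard_le_ncard_of_injOn
      (f := fun e : Sym2 V => if e.out.1 ∈ C then e.out.swap else e.out)
      (s := S) (t := (((U \ C) ×ˢ U : Finset (V × V)) : Set (V × V)))
      ?_ ?_ (Set.toFinite _)
    · rw [Set.ncard_coe_finset, Finset.card_product] at hle
      exact hle
    · rintro e ⟨he, hv, hc⟩
      push_neg at hc
      obtain ⟨w, hwe, hwc⟩ := hc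
      have h1U : e.out.1 ∈ U := hv _ (Sym2.out_fst_mem e)
      have h2U : e.out.2 ∈ U := hv _ (Sym2.out_snd_mem e)
      by_cases h1c : e.out.1 ∈ C
      · have hw2 : w = e.out.2 := by
          have hm := hwe
          rw [← Quot.out_eq e, ← Prod.mk.eta (p := e.out), Sym2.mem_iff] at hm
          rcases hm with h | h
          · exact absurd (h ▸ h1c) hwc
          · exact h
        rw [if_pos h1c]
        simp only [Finset.coe_product, Set.mem_prod, Prod.fst_swap, Prod.snd_swap,
          Set.mem_diff, Finset.mem_coe, Finset.coe_sdiff]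
        exact ⟨⟨h2U, hw2 ▸ hwc⟩, h1U⟩
      · rw [if_neg h1c]
        simp only [Finset.coe_product, Set.mem_prod, Finset.mem_coe,
          Finset.coe_sdiff, Set.mem_diff]
        exact ⟨⟨h1U, h1c⟩, h2U⟩
    · intro e₁ h₁ e₂ h₂ hf
      dsimp only at hf
      calc e₁ = _ := (key e₁).symm
        _ = _ := by rw [hf]
        _ = e₂ := key e₂
  omega

theorem sparse_set_is_small [Fintype V] (G : SimpleGraph V) (ε ρ : ℝ) (n : ℕ)
    (hn : n = Fintype.card V) (hε : 0 < ε) (hερ : ε < ρ ^ 2 / 2) (hρ : 0 < ρ) (hρ1 : ρ ≤ 1)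
    (hρn : ∃ m : ℕ, 0 < m ∧ (m : ℝ) = ρ * n)
    (hfar : FarFrom G ρ ε)
    (C : Finset V) (hC : (edgesIn G C : ℝ) ≤ ε * (n : ℝ) ^ 2 / 4) :
    (C.card : ℝ) < (1 - ε / (2 * ρ ^ 2)) * (ρ * n) := by
  classical
  obtain ⟨m, hm0, hm⟩ := hρn
  have hnpos : (0:ℝ) < n := by
    nlinarith [show (0:ℝ) < m from Nat.cast_pos.2 hm0]
  have hmlen : m ≤ n := by
    have : (m:ℝ) ≤ n := by nlinarith
    exact_mod_cast this
  have hεn2 : 0 < ε * (n:ℝ) ^ 2 := by positivity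
  by_contra hcon
  push_neg at hcon
  rcases le_or_gt m C.card with hmc | hmc
  · obtain ⟨U, hUC, hUcard⟩ := Finset.exists_subset_card_eq hmc
    have hfarU := hfar U (by rw [hUcard, ← hn, ← hm])
    have h1 : (edgesIn G U : ℝ) ≤ edgesIn G C := by
      exact_mod_cast edgesIn_mono G hUC
    rw [← hn] at hfarU
    nlinarith
  · obtain ⟨U, hCU, hUcard⟩ := Finset.exists_superset_card_eq hmc.le (hn ▸ hmlen)
    have hfarU := hfar U (by rw [hUcard, ← hn, ← hm])
    rw [← hn] at hfarU
    have h1 : (edgesIn G U : ℝ) ≤ (edgesIn G C : ℝ) + ((U \ C).card : ℝ) * U.card := by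
      exact_mod_cast edgesIn_le G hCU
    have hsd : ((U \ C).card : ℝ) = (m : ℝ) - C.card := by
      rw [Finset.card_sdiff_of_subset hCU, hUcard]
      rw [Nat.cast_sub (hmc.le.trans (le_of_eq hUcard.symm) |>.trans (le_of_eq hUcard))]
    have hUm : (U.card : ℝ) = ρ * n := by rw [hUcard, hm]
    rw [hsd, hUm] at h1
    have hρ2 : (0:ℝ) < ρ ^ 2 := by positivity
    -- m - C.card ≤ ε * n / (2 * ρ)
    have hd : (m : ℝ) - C.card ≤ ε / (2 * ρ ^ 2) * (ρ * n) := by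
      rw [hm]; nlinarith
    have hkey := mul_le_mul_of_nonneg_right hd (by positivity : (0:ℝ) ≤ ρ * n)
    have hcalc : ε / (2 * ρ ^ 2) * (ρ * n) * (ρ * n) = ε * (n:ℝ) ^ 2 / 2 := by
      field_simp
    rw [hcalc] at hkey
    linarith
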